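/- Let H be a symmetric positive definite n×n real matrix, let d, y ∈ ℝⁿ satisfy ⟨y, d⟩ > 0, and let γ be a real number with 0 < γ < ⟨y, d⟩ / ⟨d, H d⟩. Then ⟨y − γ H d, d⟩ > 0, and the Kleinmichel update H⁺ := γ [ H + ((y − γ H d)(y − γ H d)ᵀ) / (γ ⟨y − γ H d, d⟩) ] is symmetric positive definite. -/

import Mathlib

open Matrix

lemma vecMulVec_mulVec_eq {n : ℕ} (u v x : Fin n → ℝ) :
    vecMulVec u v *ᵥ x = (v ⬝ᵥ x) • u := by
  ext i
  simp [vecMulVec, mulVec, dotProduct, Finset.mul_sum, mul_comm, mul_assoc, mul_left_comm]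

theorem stmt12 {n : ℕ} (H : Matrix (Fin n) (Fin n) ℝ) (hH : H.PosDef)
    (d y : Fin n → ℝ) (hyd : 0 < y ⬝ᵥ d)
    (γ : ℝ) (hγ : 0 < γ) (hγ' : γ < (y ⬝ᵥ d) / (d ⬝ᵥ (H *ᵥ d))) :
    0 < (y - γ • (H *ᵥ d)) ⬝ᵥ d ∧
    (γ • (H + (γ * ((y - γ • (H *ᵥ d)) ⬝ᵥ d))⁻¹ •
        vecMulVec (y - γ • (H *ᵥ d)) (y - γ • (H *ᵥ d)))).PosDef := by
  set w := y - γ • (H *ᵥ d) with hw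
  have hdne : d ≠ 0 := by
    rintro rfl
    simp at hyd
  have hdHd : 0 < d ⬝ᵥ H *ᵥ d := by
    have := hH.dotProduct_mulVec_pos hdne
    simpa using this
  have h1 : γ * (d ⬝ᵥ H *ᵥ d) < y ⬝ᵥ d := (lt_div_iff₀ hdHd).mp hγ'
  have hwd : 0 < w ⬝ᵥ d := by
    have hcomm : (H *ᵥ d) ⬝ᵥ d = d ⬝ᵥ H *ᵥ d := dotProduct_comm _ _
    have : w ⬝ᵥ d = y ⬝ᵥ d - γ * (d ⬝ᵥ H *ᵥ d) := by
      simp [hw, sub_dotProduct, smul_dotProduct, hcomm]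
    rw [this]
    linarith
  refine ⟨hwd, posDef_iff_dotProduct_mulVec.mpr ⟨?_, ?_⟩⟩
  · -- Hermitian
    ext i j
    simp only [conjTranspose_apply, Matrix.smul_apply, Matrix.add_apply, vecMulVec_apply, smul_eq_mul,
      star_trivial]
    have hsym : H j i = H i j := by simpa using hH.1.apply i j
    rw [hsym]
    ring
  · intro x hx
    have hs : 0 < (γ * (w ⬝ᵥ d))⁻¹ := by positivity
    have hxHx : 0 < x ⬝ᵥ H *ᵥ x := by
      have := hH.dotProduct_mulVec_pos hx
      simpa using this
    have hsq : 0 ≤ (w ⬝ᵥ x) * (x ⬝ᵥ w) := by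
      rw [dotProduct_comm x w]
      exact mul_self_nonneg _
    have hcalc : star x ⬝ᵥ ((γ • (H + (γ * (w ⬝ᵥ d))⁻¹ • vecMulVec w w)) *ᵥ x)
        = γ * (x ⬝ᵥ H *ᵥ x + (γ * (w ⬝ᵥ d))⁻¹ * ((w ⬝ᵥ x) * (x ⬝ᵥ w))) := by
      simp [smul_mulVec, add_mulVec, vecMulVec_mulVec_eq, dotProduct_add,
        dotProduct_smul, smul_eq_mul]
      ring
    rw [hcalc]
    have : 0 < x ⬝ᵥ H *ᵥ x + (γ * (w ⬝ᵥ d))⁻¹ * ((w ⬝ᵥ x) * (x ⬝ᵥ w)) := by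
      nlinarith
    positivity
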